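/- Let f : ℝⁿ → ℝ be C² and suppose ∇f is M-Lipschitz on a convex set containing all points x + γ(x − y) for x, y in an open bounded set X̃. Let β ∈ (−1,1)\{0}, γ ∈ ℝ, and α ∈ (0, |β|/(1 + |γ|M)]. Then the momentum map F(x,y) = (x + β(x−y) − α∇f(x + γ(x−y)), x) has invertible Jacobian at every point of X̃ × X̃, with det F'(x,y) = det(βI − αγ∇²f(x + γ(x−y))) ≠ 0. -/

import Mathlib

private lemma block_det {n : ℕ} (MA MB : Matrix (Fin n) (Fin n) ℝ) :
    (Matrix.fromBlocks MA MB 1 0).det = (-MB).det := by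
  have key : Matrix.fromBlocks MA MB (1 : Matrix (Fin n) (Fin n) ℝ) 0 =
      Matrix.fromBlocks (-MB) MA 0 1 *
        (Matrix.fromBlocks 1 (-1) 0 1 * Matrix.fromBlocks 1 0 1 1 *
          Matrix.fromBlocks 1 (-1) 0 1) := by
    simp [Matrix.fromBlocks_multiply]
  rw [key]
  simp [Matrix.det_fromBlocks_zero₂₁, Matrix.det_fromBlocks_zero₁₂]

private lemma prod_map_det {n : ℕ}
    (A B : EuclideanSpace ℝ (Fin n) →ₗ[ℝ] EuclideanSpace ℝ (Fin n))
    (T : (EuclideanSpace ℝ (Fin n) × EuclideanSpace ℝ (Fin n)) →ₗ[ℝ]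
         (EuclideanSpace ℝ (Fin n) × EuclideanSpace ℝ (Fin n)))
    (hT : ∀ u v, T (u, v) = (A u + B v, u)) :
    LinearMap.det T = LinearMap.det (-B) := by
  classical
  let e := (EuclideanSpace.basisFun (Fin n) ℝ).toBasis
  let b := e.prod e
  rw [← LinearMap.det_toMatrix b T, ← LinearMap.det_toMatrix e (-B), map_neg]
  have hb : LinearMap.toMatrix b b T =
      Matrix.fromBlocks (LinearMap.toMatrix e e A) (LinearMap.toMatrix e e B) 1 0 := by
    ext i j
    rcases i with i | i <;> rcases j with j | j <;>
      simp [LinearMap.toMatrix_apply, b, Module.Basis.prod_apply, hT, Matrix.one_apply,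
        Module.Basis.prod_repr_inl, Module.Basis.prod_repr_inr, Finsupp.single_apply, eq_comm]
  rw [hb, block_det]

set_option maxHeartbeats 1000000 in
set_option synthInstance.maxHeartbeats 400000 in
/-- The lifted momentum map `F(x,y) = (x + β(x−y) − α∇f(x+γ(x−y)), x)` has an
invertible Jacobian on `X̃ × X̃`, with determinant
`det F'(x,y) = det(βI − αγ∇²f(x+γ(x−y))) ≠ 0`. -/
theorem momentum_map_jacobian_invertible {n : ℕ}
    (f : EuclideanSpace ℝ (Fin n) → ℝ) (hf : ContDiff ℝ 2 f)
    (Xt : Set (EuclideanSpace ℝ (Fin n))) (hXo : IsOpen Xt)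
    (hXb : Bornology.IsBounded Xt)
    (M α β γ : ℝ) (hM : 0 ≤ M)
    (hβ : β ∈ Set.Ioo (-1 : ℝ) 1) (hβ0 : β ≠ 0)
    (hα0 : 0 < α) (hα1 : α ≤ |β| / (1 + |γ| * M))
    (hHess : ∀ x ∈ Xt, ∀ y ∈ Xt,
      ‖fderiv ℝ (gradient f) (x + γ • (x - y))‖ ≤ M)
    (F : EuclideanSpace ℝ (Fin n) × EuclideanSpace ℝ (Fin n) →
         EuclideanSpace ℝ (Fin n) × EuclideanSpace ℝ (Fin n))
    (hF : ∀ p, F p = (p.1 + β • (p.1 - p.2) - α • gradient f (p.1 + γ • (p.1 - p.2)), p.1)) :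
    ∀ x ∈ Xt, ∀ y ∈ Xt,
      LinearMap.det ((fderiv ℝ F (x, y)).toLinearMap) =
        LinearMap.det ((β • ContinuousLinearMap.id ℝ (EuclideanSpace ℝ (Fin n))
          - (α * γ) • fderiv ℝ (gradient f) (x + γ • (x - y))).toLinearMap) ∧
      LinearMap.det ((fderiv ℝ F (x, y)).toLinearMap) ≠ 0 := by
  intro x hx y hy
  -- gradient f is C¹
  have hgrad : ContDiff ℝ 1 (gradient f) := by
    have h1 : ContDiff ℝ 1 (fderiv ℝ f) := hf.fderiv_right (by norm_num)
    have h2 : gradient f =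
        fun z => (InnerProductSpace.toDual ℝ (EuclideanSpace ℝ (Fin n))).symm (fderiv ℝ f z) :=
      rfl
    rw [h2]
    exact (InnerProductSpace.toDual ℝ (EuclideanSpace ℝ (Fin n))).symm.contDiff.comp h1
  set z : EuclideanSpace ℝ (Fin n) := x + γ • (x - y) with hz
  set H : EuclideanSpace ℝ (Fin n) →L[ℝ] EuclideanSpace ℝ (Fin n) :=
    fderiv ℝ (gradient f) z with hH
  -- the continuous linear maps
  set fst : EuclideanSpace ℝ (Fin n) × EuclideanSpace ℝ (Fin n) →L[ℝ] EuclideanSpace ℝ (Fin n) :=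
    ContinuousLinearMap.fst ℝ _ _ with hfst
  set snd : EuclideanSpace ℝ (Fin n) × EuclideanSpace ℝ (Fin n) →L[ℝ] EuclideanSpace ℝ (Fin n) :=
    ContinuousLinearMap.snd ℝ _ _ with hsnd
  set ℓ := fst + γ • (fst - snd) with hℓ
  set K := fst + β • (fst - snd) with hK
  set D := (K - α • (H.comp ℓ)).prod fst with hD
  have hℓxy : ℓ (x, y) = z := by simp [hℓ, hfst, hsnd, hz]
  have hFeq : F = fun p => (K p - α • gradient f (ℓ p), fst p) := by
    funext p
    rw [hF]
    simp [hK, hℓ, hfst, hsnd]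
  have hdiff : DifferentiableAt ℝ (gradient f) (ℓ (x, y)) :=
    (hgrad.differentiable one_ne_zero).differentiableAt
  have hFd : HasFDerivAt F D (x, y) := by
    rw [hFeq, hD]
    have hg : HasFDerivAt (fun p => gradient f (ℓ p)) (H.comp ℓ) (x, y) := by
      have h3 := hdiff.hasFDerivAt
      rw [hℓxy] at h3
      exact h3.comp (x, y) ℓ.hasFDerivAt
    exact (HasFDerivAt.prodMk (K.hasFDerivAt.sub (hg.const_smul α)) fst.hasFDerivAt)
  have hfD : fderiv ℝ F (x, y) = D := hFd.fderiv
  -- linear maps for the determinant lemma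
  set C := β • ContinuousLinearMap.id ℝ (EuclideanSpace ℝ (Fin n)) - (α * γ) • H with hC
  set Alm : EuclideanSpace ℝ (Fin n) →ₗ[ℝ] EuclideanSpace ℝ (Fin n) :=
    (1 + β) • LinearMap.id - (α * (1 + γ)) • (H : _ →ₗ[ℝ] _) with hAlm
  have hT : ∀ u v, D.toLinearMap (u, v) = (Alm u + (-C.toLinearMap) v, u) := by
    intro u v
    simp only [hD, hAlm, hC, ContinuousLinearMap.coe_coe, ContinuousLinearMap.prod_apply,
      ContinuousLinearMap.coe_sub', Pi.sub_apply, ContinuousLinearMap.coe_smul', Pi.smul_apply,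
      ContinuousLinearMap.comp_apply, hK, hℓ, ContinuousLinearMap.add_apply,
      ContinuousLinearMap.smul_apply, ContinuousLinearMap.sub_apply, hfst, hsnd,
      ContinuousLinearMap.coe_fst', ContinuousLinearMap.coe_snd', LinearMap.neg_apply,
      LinearMap.sub_apply, LinearMap.smul_apply, LinearMap.id_apply,
      ContinuousLinearMap.coe_id', id_eq, map_add, map_smul, map_sub, Prod.mk.injEq]
    exact ⟨by module, by trivial⟩
  have hdet : LinearMap.det D.toLinearMap = LinearMap.det C.toLinearMap := by
    rw [prod_map_det Alm (-C.toLinearMap) D.toLinearMap hT, neg_neg]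
  -- C is invertible
  have habs : 0 < |β| := abs_pos.2 hβ0
  have hHM : ‖H‖ ≤ M := hHess x hx y hy
  have hαm : α * (1 + |γ| * M) ≤ |β| := by
    rw [← le_div_iff₀ (by positivity)]
    exact hα1
  have hlt : α * (|γ| * M) < |β| := by
    have h4 : α * (1 + |γ| * M) = α + α * (|γ| * M) := by ring
    linarith [hαm, hα0]
  set t := (β⁻¹ * (α * γ)) • H with ht
  have htn : ‖t‖ < 1 := by
    have he : ‖(β⁻¹ * (α * γ)) • H‖ = ‖β⁻¹ * (α * γ)‖ * ‖H‖ := norm_smul (β⁻¹ * (α * γ)) H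
    rw [ht, he, Real.norm_eq_abs, abs_mul, abs_inv, abs_mul, abs_of_pos hα0]
    calc |β|⁻¹ * (α * |γ|) * ‖H‖ ≤ |β|⁻¹ * (α * (|γ| * M)) := by
          rw [mul_assoc, ← mul_assoc α]
          gcongr
      _ < |β|⁻¹ * |β| := by gcongr
      _ = 1 := inv_mul_cancel₀ (ne_of_gt habs)
  have hmul : β * (β⁻¹ * (α * γ)) = α * γ := by field_simp
  have hCeq : C = β • (1 - t) := by
    rw [hC, ht, smul_sub, smul_smul, hmul, ContinuousLinearMap.one_def]
  set u := Units.oneSub t htn with hu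
  set Cinv := β⁻¹ • (↑u⁻¹ : EuclideanSpace ℝ (Fin n) →L[ℝ] EuclideanSpace ℝ (Fin n)) with hCinv
  have h1 : C * Cinv = 1 := by
    rw [hCeq, hCinv]
    have e1 : (β • ((1 : EuclideanSpace ℝ (Fin n) →L[ℝ] EuclideanSpace ℝ (Fin n)) - t)) *
        (β⁻¹ • (↑u⁻¹ : EuclideanSpace ℝ (Fin n) →L[ℝ] EuclideanSpace ℝ (Fin n)))
        = (β * β⁻¹) • (((1 : EuclideanSpace ℝ (Fin n) →L[ℝ] EuclideanSpace ℝ (Fin n)) - t) *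
          ↑u⁻¹) := by
      rw [ContinuousLinearMap.mul_def, ContinuousLinearMap.smul_comp,
        ContinuousLinearMap.comp_smul, smul_smul, ContinuousLinearMap.mul_def]
    rw [e1, mul_inv_cancel₀ hβ0, one_smul]
    have e2 : ((1 : EuclideanSpace ℝ (Fin n) →L[ℝ] EuclideanSpace ℝ (Fin n)) - t) = ↑u := rfl
    rw [e2]
    exact u.mul_inv
  have hCdet : LinearMap.det C.toLinearMap ≠ 0 := by
    have h2 : LinearMap.det C.toLinearMap * LinearMap.det Cinv.toLinearMap = 1 := by
      rw [← LinearMap.det_comp]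
      have h3 : (C.toLinearMap).comp Cinv.toLinearMap
          = ((C * Cinv : EuclideanSpace ℝ (Fin n) →L[ℝ] EuclideanSpace ℝ (Fin n)) :
            _ →ₗ[ℝ] _) := rfl
      rw [h3, h1]
      simp [ContinuousLinearMap.one_def]
    intro h
    rw [h, zero_mul] at h2
    exact zero_ne_one h2
  exact ⟨by rw [hfD, hdet], by rw [hfD, hdet]; exact hCdet⟩
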